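/- Let d ≥ 1, let α, β ∈ ℤ^d with α ▹ 0 and β ▹ 0, and suppose (2q+1)·α = (2p+1)·β for nonnegative integers p, q with gcd(2p+1, 2q+1) = 1. Then 3·⟨𝒞(α·x), 𝒞(β·x)⟩ = 1/((2p+1)²·(2q+1)²) in L²([0,1]^d). -/

import Mathlib

open MeasureTheory Filter Topology

/-- The 1-periodic piecewise linear "cosine-like" function:
`𝒞(x) = 4|x - 1/2| - 1` on `[0,1]`, extended by `𝒞(x) = 𝒞(x - ⌊x⌋)`. -/
noncomputable def Cfun (x : ℝ) : ℝ := 4 * |Int.fract x - 1 / 2| - 1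

/-- The 1-periodic piecewise linear "sine-like" function:
`𝒮(x) = |2 - 4|x - 1/4|| - 1` on `[0,1]`, extended by `𝒮(x) = 𝒮(x - ⌊x⌋)`. -/
noncomputable def Sfun (x : ℝ) : ℝ := abs (2 - 4 * |Int.fract x - 1 / 4|) - 1

/-- `α ▹ 0`: the first nonzero entry of the integer vector `α` is positive. -/
def PosLead {d : ℕ} (α : Fin d → ℤ) : Prop :=
  ∃ i : Fin d, 0 < α i ∧ ∀ j : Fin d, j < i → α j = 0

lemma Cfun_add_int (x : ℝ) (n : ℤ) : Cfun (x + n) = Cfun x := by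
  simp [Cfun, Int.fract_add_intCast]

lemma Cfun_periodic : Function.Periodic Cfun 1 := fun x => by
  simpa using Cfun_add_int x 1

lemma measurable_Cfun : Measurable Cfun :=
  (((measurable_fract.sub measurable_const).abs).const_mul 4).sub measurable_const

lemma abs_Cfun_le (x : ℝ) : |Cfun x| ≤ 1 := by
  have h0 := Int.fract_nonneg x
  have h1 := Int.fract_lt_one x
  have h2 : |Int.fract x - 1/2| ≤ 1/2 := abs_le.2 ⟨by linarith, by linarith⟩
  have h3 : (0:ℝ) ≤ |Int.fract x - 1/2| := abs_nonneg _
  rw [Cfun]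
  rw [abs_le]
  constructor <;> linarith

lemma Cfun_eq_of_mem (x : ℝ) (h0 : 0 ≤ x) (h1 : x < 1) : Cfun x = 4 * |x - 1/2| - 1 := by
  rw [Cfun, Int.fract_eq_self.2 ⟨h0, h1⟩]

lemma Cfun_congr_mod (m : ℕ) [NeZero m] (t : ℝ) {a b : ℤ} (hab : (a : ZMod m) = b) :
    Cfun (t + a / m) = Cfun (t + b / m) := by
  have hm : (m:ℝ) ≠ 0 := Nat.cast_ne_zero.2 (NeZero.ne m)
  obtain ⟨s, hs⟩ : (m:ℤ) ∣ a - b := by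
    rwa [← ZMod.intCast_zmod_eq_zero_iff_dvd, Int.cast_sub, sub_eq_zero]
  have key : t + (a:ℝ) / m = (t + b / m) + (s : ℤ) := by
    have : (a : ℝ) = b + m * s := by
      have : (a : ℝ) - b = m * s := by exact_mod_cast congrArg (Int.cast : ℤ → ℝ) hs
      linarith
    rw [this]
    field_simp
    ring
  rw [key, Cfun_add_int]

lemma sum_Cfun_div_aux (r : ℕ) (u : ℝ) (h0 : 0 ≤ u) (h1 : u < 1) :
    ∑ j ∈ Finset.range (2*r+1), Cfun (u/(2*(r:ℝ)+1) + (j:ℝ) / (2*(r:ℝ)+1))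
      = Cfun u / (2*(r:ℝ)+1) := by
  have hmr : ((2*r+1 : ℕ):ℝ) = 2*(r:ℝ)+1 := by push_cast; ring
  rw [← hmr]
  set m : ℕ := 2*r+1 with hmdef
  have hm0 : (0:ℝ) < (m:ℝ) := by positivity
  have hterm : ∀ j ∈ Finset.range m, Cfun (u/(m:ℝ) + (j:ℝ)/m)
      = 4 * |u/(m:ℝ) + (j:ℝ)/m - 1/2| - 1 := by
    intro j hj
    have hj' : (j:ℝ) ≤ (m:ℝ) - 1 := by
      have h := Finset.mem_range.1 hj
      have : (j:ℝ) + 1 ≤ (m:ℝ) := by exact_mod_cast h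
      linarith
    apply Cfun_eq_of_mem
    · positivity
    · rw [← add_div, div_lt_one hm0]; linarith
  rw [Finset.sum_congr rfl hterm]
  have habs : ∑ j ∈ Finset.range m, |u/(m:ℝ) + (j:ℝ)/m - 1/2|
      = (r:ℝ)*((r:ℝ)+1)/m + |u - 1/2|/m := by
    have hsplit : m = r + (r+1) := by omega
    rw [show Finset.range m = Finset.range (r + (r+1)) by rw [hsplit], Finset.sum_range_add, Finset.sum_range_succ']
    have e1 : ∀ i ∈ Finset.range r, |u/(m:ℝ) + (i:ℝ)/m - 1/2|
        = 1/2 - u/m - (i:ℝ)/m := by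
      intro i hi
      have hi' : (i:ℝ) ≤ (r:ℝ) - 1 := by
        have h := Finset.mem_range.1 hi
        have : (i:ℝ) + 1 ≤ (r:ℝ) := by exact_mod_cast h
        linarith
      have hle : u/(m:ℝ) + (i:ℝ)/m - 1/2 ≤ 0 := by
        rw [← add_div, sub_nonpos, div_le_iff₀ hm0, hmr]
        linarith
      rw [abs_of_nonpos hle]; ring
    have e2 : ∀ i ∈ Finset.range r, |u/(m:ℝ) + ((r + (i+1) : ℕ):ℝ)/m - 1/2|
        = u/m + ((r + (i+1) : ℕ):ℝ)/m - 1/2 := by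
      intro i hi
      have hcast : ((r + (i+1) : ℕ):ℝ) = (r:ℝ) + (i:ℝ) + 1 := by push_cast; ring
      have hge : (0:ℝ) ≤ u/(m:ℝ) + ((r + (i+1) : ℕ):ℝ)/m - 1/2 := by
        rw [hcast, ← add_div, sub_nonneg, le_div_iff₀ hm0, hmr]
        have : (0:ℝ) ≤ (i:ℝ) := by positivity
        linarith
      rw [abs_of_nonneg hge]
    rw [Finset.sum_congr rfl e1, Finset.sum_congr rfl e2]
    have emid : u/(m:ℝ) + ((r + 0 : ℕ):ℝ)/m - 1/2 = (u - 1/2)/m := by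
      rw [hmr]; push_cast; field_simp; ring
    rw [emid, abs_div, abs_of_pos hm0]
    rw [← add_assoc, ← Finset.sum_add_distrib]
    have epair : ∀ i ∈ Finset.range r,
        (1/2 - u/(m:ℝ) - (i:ℝ)/m) + (u/m + ((r + (i+1) : ℕ):ℝ)/m - 1/2)
          = ((r:ℝ)+1)/m := by
      intro i hi
      have hcast : ((r + (i+1) : ℕ):ℝ) = (r:ℝ) + (i:ℝ) + 1 := by push_cast; ring
      rw [hcast]
      field_simp
      ring
    rw [Finset.sum_congr rfl epair, Finset.sum_const, Finset.card_range,
      nsmul_eq_mul]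
    ring
  rw [Finset.sum_sub_distrib, ← Finset.mul_sum, habs, Finset.sum_const,
    Finset.card_range, nsmul_eq_mul, mul_one, Cfun_eq_of_mem u h0 h1, hmr]
  have hx : (0:ℝ) < 2*(r:ℝ)+1 := by positivity
  field_simp
  ring

lemma zmod_sum_eq (m : ℕ) [NeZero m] (f : ℕ → ℝ) :
    ∑ j : ZMod m, f (ZMod.val j) = ∑ j ∈ Finset.range m, f j := by
  apply Finset.sum_nbij' (i := fun (j : ZMod m) => ZMod.val j)
    (j := fun (a : ℕ) => (a : ZMod m))
  · intro a _; exact Finset.mem_range.2 (ZMod.val_lt a)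
  · intro a _; exact Finset.mem_univ _
  · intro a _; simp [ZMod.natCast_val, ZMod.cast_id]
  · intro a ha; exact ZMod.val_cast_of_lt (Finset.mem_range.1 ha)
  · intro a _; rfl

lemma sum_Cfun_div (r : ℕ) (t : ℝ) :
    ∑ j : ZMod (2*r+1), Cfun (t + (ZMod.val j : ℝ) / (2*(r:ℝ)+1))
      = Cfun ((2*(r:ℝ)+1) * t) / (2*(r:ℝ)+1) := by
  set m : ℕ := 2*r+1 with hmdef
  haveI : NeZero m := ⟨by omega⟩
  have hmr : ((m : ℕ):ℝ) = 2*(r:ℝ)+1 := by rw [hmdef]; push_cast; ring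
  rw [← hmr]
  have hm0 : (0:ℝ) < (m:ℝ) := by positivity
  set k : ℤ := ⌊(m:ℝ)*t⌋ with hk
  set u : ℝ := Int.fract ((m:ℝ)*t) with hu
  have hfr : (m:ℝ)*t = u + k := by rw [hu]; unfold Int.fract; ring
  have ht : t = u/m + (k:ℝ)/m := by
    field_simp
    linarith [hfr]
  -- rewrite each term
  have step1 : ∀ j : ZMod m, Cfun (t + (ZMod.val j : ℝ) / m)
      = Cfun (u/m + (((j + (k : ZMod m)).val : ℤ) : ℝ) / m) := by
    intro j
    have e1 : t + (ZMod.val j : ℝ) / m = u/m + (((ZMod.val j : ℤ) + k : ℤ) : ℝ)/m := by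
      rw [ht]; push_cast; ring
    rw [e1]
    apply Cfun_congr_mod
    push_cast
    simp [ZMod.natCast_val, ZMod.cast_id]
  rw [Finset.sum_congr rfl (fun j _ => step1 j)]
  -- reindex by addition
  have step2 : ∑ j : ZMod m, Cfun (u/m + (((j + (k : ZMod m)).val : ℤ) : ℝ) / m)
      = ∑ j : ZMod m, Cfun (u/m + ((ZMod.val j : ℕ) : ℝ) / m) := by
    rw [← Equiv.sum_comp (Equiv.addRight (k : ZMod m))
      (fun j => Cfun (u/m + ((ZMod.val j : ℕ) : ℝ) / m))]
    apply Finset.sum_congr rfl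
    intro j _
    push_cast
    rfl
  rw [step2, zmod_sum_eq m (fun a => Cfun (u/m + (a:ℝ)/m))]
  have h0 : 0 ≤ u := Int.fract_nonneg _
  have h1 : u < 1 := Int.fract_lt_one _
  have := sum_Cfun_div_aux r u h0 h1
  rw [← hmdef, ← hmr] at this
  rw [hfr, Cfun_add_int]
  exact this

lemma intervalIntegrable_of_bound {f : ℝ → ℝ} (hm : Measurable f) (C : ℝ)
    (h : ∀ x, |f x| ≤ C) (a b : ℝ) : IntervalIntegrable f volume a b := by
  rw [intervalIntegrable_iff]
  haveI : IsFiniteMeasure (volume.restrict (Set.uIoc a b)) :=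
    ⟨by rw [Measure.restrict_apply_univ]; exact measure_Ioc_lt_top⟩
  apply Integrable.mono' (integrable_const C) hm.aestronglyMeasurable.restrict
  exact Filter.Eventually.of_forall fun x => by simpa [Real.norm_eq_abs] using h x

lemma measurable_CC (a b c : ℝ) : Measurable fun x => Cfun (a*x) * Cfun (b*x + c) :=
  (measurable_Cfun.comp (measurable_id.const_mul a)).mul
    (measurable_Cfun.comp ((measurable_id.const_mul b).add_const c))

lemma bound_CC (a b c : ℝ) (x : ℝ) : |Cfun (a*x) * Cfun (b*x + c)| ≤ 1 := by
  rw [abs_mul]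
  have h1 := abs_Cfun_le (a*x)
  have h2 := abs_Cfun_le (b*x + c)
  have h3 : (0:ℝ) ≤ |Cfun (a*x)| := abs_nonneg _
  nlinarith [abs_nonneg (Cfun (b*x+c))]

lemma CC_intervalIntegrable (a b c : ℝ) (a' b' : ℝ) :
    IntervalIntegrable (fun x => Cfun (a*x) * Cfun (b*x + c)) volume a' b' :=
  intervalIntegrable_of_bound (measurable_CC a b c) 1 (bound_CC a b c) a' b'

lemma CC_periodic (a b : ℤ) : Function.Periodic (fun x => Cfun (a*x) * Cfun (b*x)) 1 := by
  intro x
  have h1 : (a:ℝ) * (x+1) = a*x + (a:ℤ) := by push_cast; ring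
  have h2 : (b:ℝ) * (x+1) = b*x + (b:ℤ) := by push_cast; ring
  simp only [h1, h2, Cfun_add_int]

lemma sum_Cfun_mul (r n : ℕ) (hn : Nat.Coprime n (2*r+1)) (t : ℝ) :
    ∑ j : ZMod (2*r+1), Cfun (t + ((n * ZMod.val j : ℕ):ℝ)/(2*(r:ℝ)+1))
      = Cfun ((2*(r:ℝ)+1)*t)/(2*(r:ℝ)+1) := by
  set m : ℕ := 2*r+1 with hmdef
  haveI : NeZero m := ⟨by omega⟩
  have hmr : ((m:ℕ):ℝ) = 2*(r:ℝ)+1 := by rw [hmdef]; push_cast; ring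
  rw [← hmr]
  set u : (ZMod m)ˣ := ZMod.unitOfCoprime n hn with hudef
  have step1 : ∀ j : ZMod m, Cfun (t + ((n * ZMod.val j : ℕ):ℝ)/m)
      = Cfun (t + (ZMod.val ((u:ZMod m) * j) : ℝ)/m) := by
    intro j
    have e1 : ((n * ZMod.val j : ℕ):ℝ) = (((n * ZMod.val j : ℕ) : ℤ) : ℝ) := by push_cast; ring
    have e2 : (ZMod.val ((u:ZMod m) * j) : ℝ) = (((ZMod.val ((u:ZMod m) * j) : ℕ) : ℤ) : ℝ) := by
      push_cast; ring
    rw [e1, e2]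
    apply Cfun_congr_mod
    push_cast
    simp [ZMod.natCast_val, ZMod.cast_id]
    rw [hudef, ZMod.coe_unitOfCoprime]
  rw [Finset.sum_congr rfl (fun j _ => step1 j)]
  have step2 : ∑ j : ZMod m, Cfun (t + (ZMod.val ((u:ZMod m) * j) : ℝ)/m)
      = ∑ j : ZMod m, Cfun (t + (ZMod.val j : ℝ)/m) :=
    Function.Bijective.sum_comp (Units.mulLeft_bijective u)
      (fun j => Cfun (t + (ZMod.val j : ℝ)/m))
  rw [step2]
  rw [show ((m:ℕ):ℝ) = 2*(r:ℝ)+1 from hmr]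
  exact sum_Cfun_div r t

lemma step (r n : ℕ) (hn : Nat.Coprime n (2*r+1)) :
    ∫ x in (0:ℝ)..1, Cfun ((2*(r:ℝ)+1) * x) * Cfun ((n:ℝ) * x)
      = (1/(2*(r:ℝ)+1)^2) * ∫ x in (0:ℝ)..1, Cfun x * Cfun ((n:ℝ) * x) := by
  set m : ℕ := 2*r+1 with hmdef
  haveI : NeZero m := ⟨by omega⟩
  have hmr : ((m:ℕ):ℝ) = 2*(r:ℝ)+1 := by rw [hmdef]; push_cast; ring
  rw [← hmr]
  have hm0 : (0:ℝ) < (m:ℝ) := by positivity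
  set Φ : ℝ → ℝ := fun x => Cfun ((m:ℝ)*x) * Cfun ((n:ℝ)*x) with hΦ
  have hper : Function.Periodic Φ 1 := by
    have h := CC_periodic (m:ℤ) (n:ℤ)
    intro x
    have := h x
    simpa using this
  have shift : ∀ j : ZMod m, (∫ x in (0:ℝ)..1,
      Cfun ((m:ℝ)*x) * Cfun ((n:ℝ)*x + ((n * ZMod.val j : ℕ):ℝ)/m)) = ∫ x in (0:ℝ)..1, Φ x := by
    intro j
    set c : ℝ := (ZMod.val j : ℝ)/m with hc
    have e1 : ∀ x : ℝ, Cfun ((m:ℝ)*x) * Cfun ((n:ℝ)*x + ((n * ZMod.val j : ℕ):ℝ)/m)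
        = Φ (x + c) := by
      intro x
      have a1 : (m:ℝ)*(x+c) = (m:ℝ)*x + ((ZMod.val j : ℤ):ℝ) := by
        rw [hc]; push_cast; field_simp
      have a2 : (n:ℝ)*(x+c) = (n:ℝ)*x + ((n * ZMod.val j : ℕ):ℝ)/m := by
        rw [hc]; push_cast; field_simp
      rw [hΦ]
      simp only [a1, a2, Cfun_add_int]
    rw [intervalIntegral.integral_congr (fun x _ => e1 x)]
    rw [intervalIntegral.integral_comp_add_right Φ c]
    have := hper.intervalIntegral_add_eq c 0
    simpa [add_comm] using this
  have main : (m:ℝ) * (∫ x in (0:ℝ)..1, Φ x)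
      = ∑ j : ZMod m, ∫ x in (0:ℝ)..1,
          Cfun ((m:ℝ)*x) * Cfun ((n:ℝ)*x + ((n * ZMod.val j : ℕ):ℝ)/m) := by
    rw [Finset.sum_congr rfl (fun j _ => shift j), Finset.sum_const, Finset.card_univ,
      ZMod.card, nsmul_eq_mul]
  rw [← intervalIntegral.integral_finset_sum
    (fun j _ => CC_intervalIntegrable (m:ℝ) (n:ℝ) _ 0 1)] at main
  have inner : ∀ x : ℝ, (∑ j : ZMod m,
      Cfun ((m:ℝ)*x) * Cfun ((n:ℝ)*x + ((n * ZMod.val j : ℕ):ℝ)/m))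
      = Cfun ((m:ℝ)*x) * (Cfun ((2*(r:ℝ)+1)*((n:ℝ)*x))/(2*(r:ℝ)+1)) := by
    intro x
    rw [← Finset.mul_sum]
    congr 1
    rw [hmr]
    exact sum_Cfun_mul r n hn ((n:ℝ)*x)
  rw [intervalIntegral.integral_congr (fun x _ => inner x)] at main
  -- pull out the constant 1/m
  have main2 : (m:ℝ) * (∫ x in (0:ℝ)..1, Φ x)
      = (∫ x in (0:ℝ)..1, Cfun ((m:ℝ)*x) * Cfun ((m:ℝ)*((n:ℝ)*x))) / (2*(r:ℝ)+1) := by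
    rw [main, ← intervalIntegral.integral_div]
    apply intervalIntegral.integral_congr
    intro x _
    rw [hmr]
    ring
  -- substitution
  set g : ℝ → ℝ := fun y => Cfun y * Cfun ((n:ℝ)*y) with hg
  have hΨ : Function.Periodic g 1 := by
    have h := CC_periodic (1:ℤ) (n:ℤ)
    intro x
    have := h x
    simpa using this
  have hintg : ∀ a b : ℝ, IntervalIntegrable g volume a b := by
    intro a b
    have := CC_intervalIntegrable 1 (n:ℝ) 0 a b
    simpa [hg] using this
  have sub1 : (∫ x in (0:ℝ)..1, Cfun ((m:ℝ)*x) * Cfun ((m:ℝ)*((n:ℝ)*x)))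
      = ∫ y in (0:ℝ)..1, g y := by
    have e3 : ∀ x : ℝ, Cfun ((m:ℝ)*x) * Cfun ((m:ℝ)*((n:ℝ)*x)) = g ((m:ℝ)*x) := by
      intro x
      rw [hg]
      simp only []
      rw [show (m:ℝ)*((n:ℝ)*x) = (n:ℝ)*((m:ℝ)*x) by ring]
    rw [intervalIntegral.integral_congr (fun x _ => e3 x)]
    have hcomp := intervalIntegral.integral_comp_mul_left (a := (0:ℝ)) (b := 1) g
      (ne_of_gt hm0)
    rw [mul_zero, mul_one] at hcomp
    rw [hcomp]
    have hz := hΨ.intervalIntegral_add_zsmul_eq (m:ℤ) 0 hintg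
    simp only [zero_add, zsmul_eq_mul, Int.cast_natCast, mul_one] at hz
    rw [hz, smul_eq_mul]
    field_simp
  have hm2 : ((m:ℕ):ℝ) ≠ 0 := ne_of_gt hm0
  have final : (∫ x in (0:ℝ)..1, Φ x) = (∫ y in (0:ℝ)..1, g y) / ((m:ℝ))^2 := by
    rw [← sub1]
    rw [← hmr] at main2
    field_simp at main2 ⊢
    linarith [main2, show (∫ x in (0:ℝ)..1, Cfun ((m:ℝ) * x) * Cfun ((m:ℝ) * x * (n:ℝ)))
      = ∫ x in (0:ℝ)..1, Cfun ((m:ℝ) * x) * Cfun ((m:ℝ) * (n:ℝ) * x) from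
      intervalIntegral.integral_congr (fun x _ => by rw [mul_right_comm (m:ℝ) x (n:ℝ)])]
  rw [final]
  ring

lemma poly_integral (c₁ c₂ c₃ a b : ℝ) :
    ∫ x in a..b, (c₁*x^2 + c₂*x + c₃)
      = c₁*((b^3-a^3)/3) + c₂*((b^2-a^2)/2) + c₃*(b-a) := by
  have h1 : IntervalIntegrable (fun x : ℝ => c₁*x^2) volume a b :=
    (continuous_const.mul (continuous_pow 2)).intervalIntegrable a b
  have h2 : IntervalIntegrable (fun x : ℝ => c₂*x) volume a b :=
    (continuous_const.mul continuous_id).intervalIntegrable a b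
  have h3 : IntervalIntegrable (fun x : ℝ => (c₃:ℝ)) volume a b :=
    continuous_const.intervalIntegrable a b
  rw [intervalIntegral.integral_add (h1.add h2) h3, intervalIntegral.integral_add h1 h2,
    intervalIntegral.integral_const_mul, intervalIntegral.integral_const_mul,
    integral_pow, integral_id, intervalIntegral.integral_const, smul_eq_mul]
  norm_num
  ring

lemma base_integral : ∫ x in (0:ℝ)..1, Cfun x * Cfun x = 1/3 := by
  have hcong : ∀ x ∈ Set.uIcc (0:ℝ) 1, Cfun x * Cfun x
      = (4*|x-1/2|-1) * (4*|x-1/2|-1) := by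
    intro x hx
    rw [Set.uIcc_of_le (by norm_num : (0:ℝ) ≤ 1)] at hx
    rcases lt_or_eq_of_le hx.2 with h | h
    · rw [Cfun_eq_of_mem x hx.1 h]
    · subst h
      norm_num [Cfun, Int.fract_one]
  rw [intervalIntegral.integral_congr hcong]
  have hcont : Continuous fun x : ℝ => (4*|x-1/2|-1) * (4*|x-1/2|-1) := by
    have : Continuous fun x : ℝ => 4*|x-1/2|-1 :=
      (continuous_const.mul ((continuous_id.sub continuous_const).abs)).sub continuous_const
    exact this.mul this
  rw [← intervalIntegral.integral_add_adjacent_intervals (a := (0:ℝ)) (b := 1/2) (c := 1)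
    (hcont.intervalIntegrable _ _) (hcont.intervalIntegrable _ _)]
  have e1 : ∀ x ∈ Set.uIcc (0:ℝ) (1/2), (4*|x-1/2|-1) * (4*|x-1/2|-1)
      = 16*x^2 - 8*x + 1 := by
    intro x hx
    rw [Set.uIcc_of_le (by norm_num : (0:ℝ) ≤ 1/2)] at hx
    rw [abs_of_nonpos (by linarith [hx.2] : x - 1/2 ≤ 0)]
    ring
  have e2 : ∀ x ∈ Set.uIcc (1/2:ℝ) 1, (4*|x-1/2|-1) * (4*|x-1/2|-1)
      = 16*x^2 - 24*x + 9 := by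
    intro x hx
    rw [Set.uIcc_of_le (by norm_num : (1/2:ℝ) ≤ 1)] at hx
    rw [abs_of_nonneg (by linarith [hx.1] : (0:ℝ) ≤ x - 1/2)]
    ring
  rw [intervalIntegral.integral_congr e1, intervalIntegral.integral_congr e2]
  have p1 := poly_integral 16 (-8) 1 0 (1/2)
  have p2 := poly_integral 16 (-24) 9 (1/2) 1
  have q1 : ∫ x in (0:ℝ)..(1/2), (16*x^2 - 8*x + 1) = 1/6 := by
    have : (fun x : ℝ => 16*x^2 - 8*x + 1) = fun x : ℝ => 16*x^2 + (-8)*x + 1 := by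
      funext x; ring
    rw [this, p1]; norm_num
  have q2 : ∫ x in (1/2:ℝ)..1, (16*x^2 - 24*x + 9) = 1/6 := by
    have : (fun x : ℝ => 16*x^2 - 24*x + 9) = fun x : ℝ => 16*x^2 + (-24)*x + 9 := by
      funext x; ring
    rw [this, p2]; norm_num
  rw [q1, q2]; norm_num

section pi

lemma restrict_pi_cube (d : ℕ) :
    (volume : Measure (Fin d → ℝ)).restrict (Set.Icc 0 1)
      = Measure.pi (fun _ : Fin d => (volume : Measure ℝ).restrict (Set.Icc 0 1)) := by
  rw [← Set.pi_univ_Icc]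
  refine (Measure.pi_eq fun s hs => ?_).symm
  rw [Measure.restrict_apply (MeasurableSet.univ_pi hs), ← Set.pi_inter_distrib,
    volume_pi_pi]
  exact Finset.prod_congr rfl fun i _ => (Measure.restrict_apply (hs i)).symm

instance : IsProbabilityMeasure ((volume : Measure ℝ).restrict (Set.Icc (0:ℝ) 1)) := by
  constructor
  rw [Measure.restrict_apply_univ, Real.volume_Icc]
  norm_num

lemma periodic_shift_integral (Φ : ℝ → ℝ)
    (hint : ∀ a b : ℝ, IntervalIntegrable Φ volume a b)
    (hp : Function.Periodic Φ 1) (k : ℤ) (hk : k ≠ 0) (c : ℝ) :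
    ∫ t in (0:ℝ)..1, Φ ((k:ℝ) * t + c) = ∫ t in (0:ℝ)..1, Φ t := by
  have hk' : ((k:ℝ)) ≠ 0 := Int.cast_ne_zero.2 hk
  rw [intervalIntegral.integral_comp_mul_add Φ hk' c]
  rw [mul_zero, mul_one, zero_add]
  have hz := hp.intervalIntegral_add_zsmul_eq k c hint
  have h1 : c + k • (1:ℝ) = (k:ℝ) + c := by
    rw [zsmul_eq_mul, mul_one]; ring
  rw [h1] at hz
  rw [hz]
  have h2 := hp.intervalIntegral_add_eq c 0
  rw [zero_add] at h2
  rw [h2, zsmul_eq_mul, smul_eq_mul]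
  field_simp

end pi

lemma cube_integral {d : ℕ} (γ : Fin d → ℤ) (i0 : Fin d) (hγ : γ i0 ≠ 0)
    (Φ : ℝ → ℝ) (hm : Measurable Φ) (hb : ∀ x, |Φ x| ≤ 1)
    (hint : ∀ a b : ℝ, IntervalIntegrable Φ volume a b)
    (hp : Function.Periodic Φ 1) :
    ∫ x in Set.Icc (0 : Fin d → ℝ) 1, Φ (∑ i, (γ i : ℝ) * x i)
      = ∫ t in (0:ℝ)..1, Φ t := by
  have hd : 0 < d := i0.pos
  obtain ⟨n, rfl⟩ : ∃ n, d = n + 1 := ⟨d-1, by omega⟩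
  set μ : Measure ℝ := volume.restrict (Set.Icc (0:ℝ) 1) with hμ
  rw [restrict_pi_cube (n+1)]
  set e := MeasurableEquiv.piFinSuccAbove (fun _ : Fin (n+1) => ℝ) i0 with he
  have hpres := (measurePreserving_piFinSuccAbove (fun _ : Fin (n+1) => μ) i0).symm
  rw [← hpres.integral_comp' (fun x => Φ (∑ i, (γ i : ℝ) * x i))]
  have key : (fun z : ℝ × (Fin n → ℝ) =>
      Φ (∑ i, (γ i : ℝ) * ((MeasurableEquiv.piFinSuccAbove (fun _ : Fin (n+1) => ℝ) i0).symm z) i))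
      = fun z => Φ ((γ i0 : ℝ) * z.1 + ∑ j, (γ (i0.succAbove j) : ℝ) * z.2 j) := by
    funext z
    congr 1
    rw [Fin.sum_univ_succAbove
      (fun i => (γ i : ℝ) * ((MeasurableEquiv.piFinSuccAbove (fun _ : Fin (n+1) => ℝ) i0).symm z) i) i0]
    simp [MeasurableEquiv.piFinSuccAbove_symm_apply, Fin.insertNthEquiv]
  rw [key]
  haveI : IsProbabilityMeasure μ := by rw [hμ]; infer_instance
  set ν : Measure (Fin n → ℝ) := Measure.pi (fun _ : Fin n => μ) with hν
  have hmeas : Measurable fun z : ℝ × (Fin n → ℝ) =>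
      Φ ((γ i0 : ℝ) * z.1 + ∑ j, (γ (i0.succAbove j) : ℝ) * z.2 j) := by
    apply hm.comp
    apply Measurable.add
    · exact measurable_fst.const_mul _
    · apply Finset.measurable_sum
      intro j _
      exact ((measurable_pi_apply j).comp measurable_snd).const_mul _
  have hintg : Integrable (fun z : ℝ × (Fin n → ℝ) =>
      Φ ((γ i0 : ℝ) * z.1 + ∑ j, (γ (i0.succAbove j) : ℝ) * z.2 j)) (μ.prod ν) := by
    apply Integrable.mono' (integrable_const 1) hmeas.aestronglyMeasurable
    exact Filter.Eventually.of_forall fun z => by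
      simpa [Real.norm_eq_abs] using hb _
  rw [MeasureTheory.integral_prod_symm _ hintg]
  have inner : ∀ y : Fin n → ℝ,
      (∫ t, Φ ((γ i0 : ℝ) * t + ∑ j, (γ (i0.succAbove j) : ℝ) * y j) ∂μ)
        = ∫ t in (0:ℝ)..1, Φ t := by
    intro y
    rw [hμ]
    rw [MeasureTheory.integral_Icc_eq_integral_Ioc,
      ← intervalIntegral.integral_of_le (zero_le_one)]
    exact periodic_shift_integral Φ hint hp (γ i0) hγ _
  simp_rw [inner]
  haveI : IsProbabilityMeasure ν := by rw [hν]; infer_instance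
  simp [measure_univ]

lemma oneD (p q : ℕ) (hpq : Nat.gcd (2*p+1) (2*q+1) = 1) :
    ∫ x in (0:ℝ)..1, Cfun ((2*(p:ℝ)+1) * x) * Cfun ((2*(q:ℝ)+1) * x)
      = 1 / (3 * (2*(p:ℝ)+1)^2 * (2*(q:ℝ)+1)^2) := by
  have h1 : Nat.Coprime (2*q+1) (2*p+1) := Nat.coprime_comm.mp hpq
  have e0 : ((2*q+1:ℕ):ℝ) = 2*(q:ℝ)+1 := by push_cast; ring
  have s1 := step p (2*q+1) h1
  rw [e0] at s1
  rw [s1]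
  have s2 := step q 1 (Nat.coprime_one_left _)
  simp only [Nat.cast_one, one_mul] at s2
  have comm : ∫ x in (0:ℝ)..1, Cfun x * Cfun ((2*(q:ℝ)+1)*x)
      = ∫ x in (0:ℝ)..1, Cfun ((2*(q:ℝ)+1)*x) * Cfun x := by
    apply intervalIntegral.integral_congr
    intro x _
    ring
  rw [comm, s2, base_integral]
  have hp0 : (0:ℝ) < 2*(p:ℝ)+1 := by positivity
  have hq0 : (0:ℝ) < 2*(q:ℝ)+1 := by positivity
  field_simp


/-- If `(2q+1)·α = (2p+1)·β` with `gcd(2p+1, 2q+1) = 1`, then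
`3⟨𝒞(α·x), 𝒞(β·x)⟩ = 1/((2p+1)²(2q+1)²)` in `L²([0,1]^d)`. -/
theorem inner_CC_multivariate (d : ℕ) (hd : 1 ≤ d) (α β : Fin d → ℤ)
    (hα : PosLead α) (hβ : PosLead β) (p q : ℕ)
    (hpq : Nat.gcd (2 * p + 1) (2 * q + 1) = 1)
    (h : ∀ i, ((2 * q + 1 : ℕ) : ℤ) * α i = ((2 * p + 1 : ℕ) : ℤ) * β i) :
    3 * ∫ x in Set.Icc (0 : Fin d → ℝ) 1,
        Cfun (∑ i, (α i : ℝ) * x i) * Cfun (∑ i, (β i : ℝ) * x i)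
      = 1 / ((2 * (p : ℝ) + 1) ^ 2 * (2 * (q : ℝ) + 1) ^ 2) := by

  have hco : IsCoprime ((2*p+1 : ℕ) : ℤ) ((2*q+1 : ℕ) : ℤ) := by
    rw [Int.isCoprime_iff_gcd_eq_one]
    rw [Int.gcd_natCast_natCast]
    exact hpq
  have hdvd : ∀ i, ((2*p+1 : ℕ) : ℤ) ∣ α i := by
    intro i
    exact hco.dvd_of_dvd_mul_left ⟨β i, h i⟩
  set γ : Fin d → ℤ := fun i => α i / ((2*p+1 : ℕ) : ℤ) with hγdef
  have hα' : ∀ i, α i = ((2*p+1:ℕ):ℤ) * γ i := fun i => (Int.mul_ediv_cancel' (hdvd i)).symm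
  have hp0 : ((2*p+1:ℕ):ℤ) ≠ 0 := by positivity
  have hβ' : ∀ i, β i = ((2*q+1:ℕ):ℤ) * γ i := by
    intro i
    have h2 : ((2*p+1:ℕ):ℤ) * (((2*q+1:ℕ):ℤ) * γ i) = ((2*p+1:ℕ):ℤ) * β i := by
      rw [← h i]
      rw [hα' i]
      ring
    exact (mul_left_cancel₀ hp0 h2).symm
  obtain ⟨i0, hi0pos, _⟩ := hα
  have hγ0 : γ i0 ≠ 0 := by
    intro hz
    rw [hα' i0, hz, mul_zero] at hi0pos
    exact lt_irrefl 0 hi0pos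
  set Φ : ℝ → ℝ := fun t => Cfun ((2*(p:ℝ)+1) * t) * Cfun ((2*(q:ℝ)+1) * t) with hΦ
  have hΦm : Measurable Φ :=
    (measurable_Cfun.comp (measurable_id.const_mul _)).mul
      (measurable_Cfun.comp (measurable_id.const_mul _))
  have hΦb : ∀ x, |Φ x| ≤ 1 := by
    intro x
    rw [hΦ]
    simp only []
    rw [abs_mul]
    have h1 := abs_Cfun_le ((2*(p:ℝ)+1) * x)
    have h2 := abs_Cfun_le ((2*(q:ℝ)+1) * x)
    have h3 : (0:ℝ) ≤ |Cfun ((2*(p:ℝ)+1) * x)| := abs_nonneg _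
    nlinarith [abs_nonneg (Cfun ((2*(q:ℝ)+1) * x))]
  have hΦint : ∀ a b : ℝ, IntervalIntegrable Φ volume a b :=
    intervalIntegrable_of_bound hΦm 1 hΦb
  have hΦper : Function.Periodic Φ 1 := by
    intro x
    rw [hΦ]
    simp only []
    have a1 : (2*(p:ℝ)+1) * (x+1) = (2*(p:ℝ)+1)*x + ((2*p+1 : ℕ):ℤ) := by push_cast; ring
    have a2 : (2*(q:ℝ)+1) * (x+1) = (2*(q:ℝ)+1)*x + ((2*q+1 : ℕ):ℤ) := by push_cast; ring
    rw [a1, a2, Cfun_add_int, Cfun_add_int]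
  have hre : ∀ x : Fin d → ℝ, Cfun (∑ i, (α i:ℝ) * x i) * Cfun (∑ i, (β i:ℝ) * x i)
      = Φ (∑ i, (γ i:ℝ) * x i) := by
    intro x
    have e1 : (∑ i, (α i:ℝ) * x i) = (2*(p:ℝ)+1) * ∑ i, (γ i:ℝ) * x i := by
      rw [Finset.mul_sum]
      refine Finset.sum_congr rfl fun i _ => ?_
      rw [show ((α i:ℤ):ℝ) = ((((2*p+1:ℕ):ℤ) * γ i : ℤ):ℝ) by rw [← hα' i]]
      push_cast
      ring
    have e2 : (∑ i, (β i:ℝ) * x i) = (2*(q:ℝ)+1) * ∑ i, (γ i:ℝ) * x i := by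
      rw [Finset.mul_sum]
      refine Finset.sum_congr rfl fun i _ => ?_
      rw [show ((β i:ℤ):ℝ) = ((((2*q+1:ℕ):ℤ) * γ i : ℤ):ℝ) by rw [← hβ' i]]
      push_cast
      ring
    rw [hΦ]
    simp only []
    rw [e1, e2]
  simp only [hre]
  rw [cube_integral γ i0 hγ0 Φ hΦm hΦb hΦint hΦper, oneD p q hpq]
  have hp1 : (0:ℝ) < 2*(p:ℝ)+1 := by positivity
  have hq1 : (0:ℝ) < 2*(q:ℝ)+1 := by positivity
  field_simp
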